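/- In the two-state MDP with states {Start, End}, a single action, reward 1 in Start and 0 in End, discount γ = 1/2, where from Start the system stays in Start with probability X̃ ~ Unif([0,1]) (sampled once, static) and moves to End with probability 1−X̃, the expected value function at Start is E(∑_{t≥0} (1/2)ᵗ X̃ᵗ) = E(1/(1−X̃/2)) = 2 log 2, whereas applying the expectation Bellman operator to this value function gives 1 + (1/2)·(1/2)·(2 log 2) = 1 + (log 2)/2 ≠ 2 log 2. Hence the expectation does not satisfy the Bellman fixed-point equation for static kernels. -/

import Mathlib

/-- In the two-state example with discount `γ = 1/2` and
`X̃ ~ Unif([0,1])` static, the value at `Start` for a fixed realization `x` is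
the geometric series `∑ (x/2)^t = 1/(1 - x/2)`, its expectation is
`∫₀¹ (1 - x/2)⁻¹ dx = 2 log 2`, the Bellman operator applied to this value gives
`1 + (1/2)·(1/2)·(2 log 2) = 1 + (log 2)/2`, and `2 log 2 ≠ 1 + (log 2)/2`:
the expectation does not satisfy the Bellman fixed-point equation for static
kernels. -/
theorem stmt19 :
    (∀ x ∈ Set.Icc (0:ℝ) 1, ∑' t : ℕ, ((1/2) * x) ^ t = (1 - x / 2)⁻¹) ∧
    (∫ x in (0:ℝ)..1, (1 - x / 2)⁻¹) = 2 * Real.log 2 ∧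
    1 + (1/2) * ((1/2) * (2 * Real.log 2)) = 1 + Real.log 2 / 2 ∧
    2 * Real.log 2 ≠ 1 + Real.log 2 / 2 := by
  refine ⟨?_, ?_, by ring, ?_⟩
  · intro x hx
    have h : |(1/2 : ℝ) * x| < 1 := by
      rw [abs_lt]; constructor <;> nlinarith [hx.1, hx.2]
    rw [tsum_geometric_of_lt_one (by nlinarith [hx.1]) (by nlinarith [hx.2])]
    ring_nf
  · have key : ∀ x ∈ Set.uIcc (0:ℝ) 1,
        HasDerivAt (fun y : ℝ => -2 * Real.log (1 - y / 2)) ((1 - x / 2)⁻¹) x := by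
      intro x hx
      rw [Set.uIcc_of_le (by norm_num)] at hx
      have hne : (1 : ℝ) - x / 2 ≠ 0 := by nlinarith [hx.1, hx.2]
      have h1 : HasDerivAt (fun y : ℝ => 1 - y / 2) (-(1/2) : ℝ) x := by
        simpa using ((hasDerivAt_id x).div_const 2).const_sub 1
      have h2 := (Real.hasDerivAt_log hne).comp x h1
      have := h2.const_mul (-2 : ℝ)
      exact this.congr_deriv (by ring)
    have hcont : ContinuousOn (fun x : ℝ => (1 - x / 2)⁻¹) (Set.uIcc 0 1) := by
      apply ContinuousOn.inv₀
      · fun_prop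
      · intro x hx
        rw [Set.uIcc_of_le (by norm_num)] at hx
        nlinarith [hx.1, hx.2]
    rw [intervalIntegral.integral_eq_sub_of_hasDerivAt key
      (hcont.intervalIntegrable)]
    norm_num [Real.log_inv]
    rw [one_div, Real.log_inv]
    ring
  · have h := Real.log_two_gt_d9
    intro heq
    nlinarith
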